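/- Let a and b be coprime positive integers. Then the number of pairs (s, t) of integers with 0 ≤ s ≤ b−1, 0 ≤ t ≤ a−1, and a·s + b·t > a·b equals (a−1)(b−1)/2. -/

import Mathlib

open Finset

private lemma syl_uniq (a b : ℕ) (hab : Nat.Coprime a b) {s t s' t' : ℕ}
    (hs : s < b) (hs' : s' < b) (h : a * s + b * t = a * s' + b * t') : s = s' ∧ t = t' := by
  have h1 : a * s % b = a * s' % b := by
    have := congrArg (· % b) h
    simpa [Nat.add_mul_mod_self_left] using this
  have hc : s ≡ s' [MOD b] := Nat.ModEq.cancel_left_of_coprime (by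
    rw [Nat.gcd_comm]; exact hab) h1
  have hss : s = s' := by
    have h2 : s % b = s' % b := hc
    rwa [Nat.mod_eq_of_lt hs, Nat.mod_eq_of_lt hs'] at h2
  subst hss
  refine ⟨rfl, ?_⟩
  have hb : 0 < b := Nat.pos_of_ne_zero (by rintro rfl; omega)
  have : b * t = b * t' := by omega
  exact Nat.eq_of_mul_eq_mul_left hb this

private lemma syl_rep (a b : ℕ) (hab : Nat.Coprime a b) (ha : 0 < a) (hb2 : 2 ≤ b) {n : ℕ}
    (h1 : a * b < n + a + b) (h2 : n < a * b) :
    ∃ s t, s < b ∧ t < a ∧ a * s + b * t = n := by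
  obtain ⟨x, -, hx⟩ := Nat.exists_mul_mod_eq_one_of_coprime hab (by omega)
  set s := (x * n) % b with hsdef
  have hsb : s < b := Nat.mod_lt _ (by omega)
  have hmod : a * s ≡ n [MOD b] := by
    have e1 : a * s ≡ a * (x * n) [MOD b] :=
      Nat.ModEq.mul_left a (Nat.mod_modEq _ b)
    have e2 : a * (x * n) = (a * x) * n := by ring
    have e3 : (a * x) * n ≡ 1 * n [MOD b] := by
      refine Nat.ModEq.mul_right n ?_
      show (a * x) % b = 1 % b
      rw [hx, Nat.mod_eq_of_lt (by omega)]
    calc a * s ≡ a * (x * n) [MOD b] := e1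
      _ = (a * x) * n := e2
      _ ≡ 1 * n [MOD b] := e3
      _ = n := one_mul n
  have hle : a * s ≤ n := by
    by_contra hlt
    push_neg at hlt
    have hdvd : b ∣ a * s - n := (Nat.modEq_iff_dvd' hlt.le).mp hmod.symm
    have hub : a * s ≤ a * (b - 1) := Nat.mul_le_mul_left a (by omega)
    have hub2 : a * (b - 1) + a = a * b := by
      have e : (b - 1) + 1 = b := by omega
      calc a * (b - 1) + a = a * ((b - 1) + 1) := by ring
        _ = a * b := by rw [e]
    have hsmall : a * s - n < b := by omega
    have hpos : 0 < a * s - n := by omega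
    have := Nat.le_of_dvd hpos hdvd
    omega
  have hdvd : b ∣ n - a * s := (Nat.modEq_iff_dvd' hle).mp hmod
  refine ⟨s, (n - a * s) / b, hsb, ?_, ?_⟩
  · have hbt : b * ((n - a * s) / b) = n - a * s := Nat.mul_div_cancel' hdvd
    have : b * ((n - a * s) / b) < b * a := by
      rw [hbt, mul_comm b a]; omega
    exact lt_of_mul_lt_mul_left this (Nat.zero_le b)
  · have hbt : b * ((n - a * s) / b) = n - a * s := Nat.mul_div_cancel' hdvd
    omega

/-- For coprime positive integers `a`, `b`, the number of pairs `(s, t)` with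
`0 ≤ s ≤ b−1`, `0 ≤ t ≤ a−1` and `a·s + b·t > a·b` is `(a−1)(b−1)/2`. -/
theorem sylvester_count (a b : ℕ) (ha : 0 < a) (hb : 0 < b) (hab : Nat.Coprime a b) :
    ((Finset.range b ×ˢ Finset.range a).filter
        (fun st => a * b < a * st.1 + b * st.2)).card = (a - 1) * (b - 1) / 2 := by
  -- trivial cases a = 1 or b = 1
  rcases eq_or_lt_of_le (show 1 ≤ a from ha) with ha1 | ha2
  · have : ∀ st ∈ Finset.range b ×ˢ Finset.range a,
        ¬ (a * b < a * st.1 + b * st.2) := by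
      rintro ⟨s, t⟩ hst
      simp only [Finset.mem_product, Finset.mem_range] at hst
      have ht : t = 0 := by omega
      rw [← ha1] at *
      simp only [ht, one_mul, mul_zero, add_zero, one_mul]
      omega
    rw [Finset.filter_false_of_mem this]
    simp [← ha1]
  rcases eq_or_lt_of_le (show 1 ≤ b from hb) with hb1 | hb2
  · have : ∀ st ∈ Finset.range b ×ˢ Finset.range a,
        ¬ (a * b < a * st.1 + b * st.2) := by
      rintro ⟨s, t⟩ hst
      simp only [Finset.mem_product, Finset.mem_range] at hst
      have hs : s = 0 := by omega
      rw [← hb1] at *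
      simp only [hs, mul_zero, mul_one, zero_add, one_mul]
      omega
    rw [Finset.filter_false_of_mem this]
    simp [← hb1]
  -- main case: 2 ≤ a, 2 ≤ b
  classical
  have hab2 : a + b ≤ a * b := by nlinarith
  set box := Finset.range b ×ˢ Finset.range a with hbox
  set P : ℕ × ℕ → Prop := fun st => a * b < a * st.1 + b * st.2 with hP
  set Q : ℕ × ℕ → Prop := fun st => a * st.1 + b * st.2 + a + b < a * b with hQ
  -- no pair hits the boundaries
  have hne1 : ∀ s t : ℕ, s < b → t < a → a * s + b * t ≠ a * b := by
    intro s t hs ht heq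
    have h0 : a * s + b * t = a * 0 + b * a := by rw [heq]; ring
    obtain ⟨h1, h2⟩ := syl_uniq a b hab hs (by omega) h0
    omega
  have hne2 : ∀ s t : ℕ, s < b → t < a → a * s + b * t + a + b ≠ a * b := by
    intro s t hs ht heq
    have heq' : a * (s + 1) + b * (t + 1) = a * b := by ring_nf; ring_nf at heq; omega
    rcases lt_or_eq_of_le (show s + 1 ≤ b by omega) with h | h
    · have h0 : a * (s + 1) + b * (t + 1) = a * 0 + b * a := by rw [heq']; ring
      obtain ⟨h1, h2⟩ := syl_uniq a b hab h (by omega) h0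
      omega
    · rw [h] at heq'
      have hz : b * (t + 1) = 0 := by omega
      rcases Nat.mul_eq_zero.mp hz with h' | h' <;> omega
  -- |A| = |B| via the involution (s,t) ↦ (b-1-s, a-1-t)
  have hAB : (box.filter P).card = (box.filter Q).card := by
    apply Finset.card_bij (fun st _ => (b - 1 - st.1, a - 1 - st.2))
    · rintro ⟨s, t⟩ hst
      simp only [hbox, hP, hQ, Finset.mem_filter, Finset.mem_product, Finset.mem_range] at hst ⊢
      obtain ⟨⟨hs, ht⟩, hgt⟩ := hst
      have e1 : a * (b - 1 - s) + a * s + a = a * b := by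
        rw [← Nat.mul_add, ← Nat.mul_add_one]; congr 1; omega
      have e2 : b * (a - 1 - t) + b * t + b = a * b := by
        rw [← Nat.mul_add, ← Nat.mul_add_one, mul_comm]; congr 1; omega
      refine ⟨⟨by omega, by omega⟩, by omega⟩
    · rintro ⟨s, t⟩ hst ⟨s', t'⟩ hst' heq
      simp only [hbox, hP, Finset.mem_filter, Finset.mem_product, Finset.mem_range] at hst hst'
      simp only [Prod.mk.injEq] at heq ⊢
      constructor <;> omega
    · rintro ⟨s, t⟩ hst
      simp only [hbox, hQ, Finset.mem_filter, Finset.mem_product, Finset.mem_range] at hst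
      obtain ⟨⟨hs, ht⟩, hlt⟩ := hst
      refine ⟨(b - 1 - s, a - 1 - t), ?_, ?_⟩
      · simp only [hbox, hP, Finset.mem_filter, Finset.mem_product, Finset.mem_range]
        have e1 : a * (b - 1 - s) + a * s + a = a * b := by
          rw [← Nat.mul_add, ← Nat.mul_add_one]; congr 1; omega
        have e2 : b * (a - 1 - t) + b * t + b = a * b := by
          rw [← Nat.mul_add, ← Nat.mul_add_one, mul_comm]; congr 1; omega
        refine ⟨⟨by omega, by omega⟩, by omega⟩
      · simp only [Prod.mk.injEq]
        constructor <;> omega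
  -- |M| = a + b - 1
  have hM : (box.filter (fun st => ¬ P st ∧ ¬ Q st)).card
      = (Finset.Ioo (a * b - a - b) (a * b)).card := by
    apply Finset.card_bij (fun st _ => a * st.1 + b * st.2)
    · rintro ⟨s, t⟩ hst
      simp only [hbox, hP, hQ, Finset.mem_filter, Finset.mem_product, Finset.mem_range,
        not_lt] at hst
      obtain ⟨⟨hs, ht⟩, h1, h2⟩ := hst
      have k1 := hne1 s t hs ht
      have k2 := hne2 s t hs ht
      simp only [Finset.mem_Ioo]
      omega
    · rintro ⟨s, t⟩ hst ⟨s', t'⟩ hst' heq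
      simp only [hbox, Finset.mem_filter, Finset.mem_product, Finset.mem_range] at hst hst'
      obtain ⟨h1, h2⟩ := syl_uniq a b hab hst.1.1 hst'.1.1 heq
      simp only [Prod.mk.injEq]
      exact ⟨by simpa using h1, by simpa using h2⟩
    · intro n hn
      simp only [Finset.mem_Ioo] at hn
      obtain ⟨s, t, hs, ht, heq⟩ := syl_rep a b hab ha (by omega) (by omega) hn.2
      refine ⟨(s, t), ?_, heq⟩
      simp only [hbox, hP, hQ, Finset.mem_filter, Finset.mem_product, Finset.mem_range, not_lt]
      exact ⟨⟨hs, ht⟩, by omega, by omega⟩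
  -- partition
  have hsplit1 : (box.filter P).card + (box.filter (fun st => ¬ P st)).card = box.card :=
    Finset.card_filter_add_card_filter_not P
  have hsplit2 : ((box.filter (fun st => ¬ P st)).filter Q).card
      + ((box.filter (fun st => ¬ P st)).filter (fun st => ¬ Q st)).card
      = (box.filter (fun st => ¬ P st)).card :=
    Finset.card_filter_add_card_filter_not Q
  have e1 : (box.filter (fun st => ¬ P st)).filter Q = box.filter Q := by
    rw [Finset.filter_filter]
    apply Finset.filter_congr
    rintro ⟨s, t⟩ hst
    simp only [hP, hQ]
    constructor
    · tauto
    · intro h; exact ⟨by omega, h⟩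
  have e2 : (box.filter (fun st => ¬ P st)).filter (fun st => ¬ Q st)
      = box.filter (fun st => ¬ P st ∧ ¬ Q st) := by
    rw [Finset.filter_filter]
  have hboxcard : box.card = b * a := by
    simp [hbox]
  have hIoo : (Finset.Ioo (a * b - a - b) (a * b)).card = a + b - 1 := by
    rw [Nat.card_Ioo]
    have : a + b ≤ a * b := by nlinarith
    omega
  have hfact : (a - 1) * (b - 1) + a + b = a * b + 1 := by
    obtain ⟨a', rfl⟩ : ∃ a', a = a' + 1 := ⟨a - 1, by omega⟩
    obtain ⟨b', rfl⟩ : ∃ b', b = b' + 1 := ⟨b - 1, by omega⟩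
    simp only [Nat.add_sub_cancel]
    ring
  rw [e1, e2] at hsplit2
  rw [hM, hIoo] at hsplit2
  rw [hboxcard] at hsplit1
  have key : 2 * (box.filter P).card = (a - 1) * (b - 1) := by
    have hba : b * a = a * b := Nat.mul_comm b a
    omega
  have hgoal : (box.filter P).card = (a - 1) * (b - 1) / 2 := by omega
  convert hgoal using 2
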